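/- There is a bound P such that for every prime number p > P, setting c = 1/4 − 1/p², the map f_c(z) = z² + c has exactly 4 rational preperiodic points, namely 1/2 + 1/p, 1/2 − 1/p, −1/2 + 1/p, −1/2 − 1/p; moreover 1/2 + 1/p and 1/2 − 1/p are fixed points of f_c. -/

import Mathlib

/-- The quadratic map `f_c(z) = z² + c`. -/
def fc (c : ℚ) : ℚ → ℚ := fun z => z ^ 2 + c

/-- `x` is preperiodic for `f_c`: its forward orbit is eventually periodic. -/
def IsPreper (c x : ℚ) : Prop := ∃ m n : ℕ, m < n ∧ (fc c)^[m] x = (fc c)^[n] x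

lemma preper_step {c x : ℚ} (h : IsPreper c x) : IsPreper c (fc c x) := by
  obtain ⟨m, n, hmn, he⟩ := h
  exact ⟨m, n, hmn, by
    rw [← Function.iterate_succ_apply, ← Function.iterate_succ_apply,
      Function.iterate_succ_apply', Function.iterate_succ_apply', he]⟩

lemma preper_bound {c x : ℚ} (hc0 : 0 < c) (h : IsPreper c x) : |x| ≤ 3 / 2 := by
  by_contra hb
  push_neg at hb
  have key : ∀ y : ℚ, 3 / 2 < |y| → 3 / 2 < |fc c y| ∧ |y| < |fc c y| := by
    intro y hy
    have h2 : y ^ 2 = |y| ^ 2 := (sq_abs y).symm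
    have h3 : 0 < y ^ 2 + c := by nlinarith [abs_nonneg y]
    have h4 : |fc c y| = y ^ 2 + c := abs_of_pos h3
    constructor <;> (rw [h4]; nlinarith [abs_nonneg y])
  have main : ∀ n : ℕ, 3 / 2 < |(fc c)^[n] x| ∧ |(fc c)^[n] x| < |(fc c)^[n+1] x| := by
    intro n
    induction n with
    | zero => exact ⟨hb, (key x hb).2⟩
    | succ k ih =>
      have h1 : 3 / 2 < |(fc c)^[k+1] x| := by
        rw [Function.iterate_succ_apply']
        rw [Function.iterate_succ_apply'] at ih
        exact (key _ ih.1).1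
      refine ⟨h1, ?_⟩
      rw [Function.iterate_succ_apply' (n := k+1)]
      exact (key _ h1).2
  have mono : StrictMono (fun n => |(fc c)^[n] x|) :=
    strictMono_nat_of_lt_succ (fun n => (main n).2)
  obtain ⟨m, n, hmn, he⟩ := h
  have := mono hmn
  simp only [he] at this
  exact lt_irrefl _ this

lemma blow_step {q : ℕ} [Fact q.Prime] {c x : ℚ} (hc : c ≠ 0) (hx : x ≠ 0)
    (hv : 2 * padicValRat q x < padicValRat q c) :
    fc c x ≠ 0 ∧ padicValRat q (fc c x) = 2 * padicValRat q x := by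
  have hx2 : x ^ 2 ≠ 0 := pow_ne_zero _ hx
  have hvx2 : padicValRat q (x ^ 2) = 2 * padicValRat q x := by
    rw [padicValRat.pow x]; push_cast; ring
  have hlt : padicValRat q (x ^ 2) < padicValRat q c := by rw [hvx2]; exact hv
  have hne : x ^ 2 + c ≠ 0 := by
    intro h
    have : x ^ 2 = -c := by linarith [h]
    rw [this, padicValRat.neg] at hlt
    exact lt_irrefl _ hlt
  refine ⟨hne, ?_⟩
  rw [show fc c x = x ^ 2 + c from rfl, padicValRat.add_eq_of_lt hne hx2 hc hlt, hvx2]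

lemma blowup {q : ℕ} [Fact q.Prime] {c x : ℚ} (hc : c ≠ 0) (hx : x ≠ 0)
    (hneg : padicValRat q x < 0) (hv : 2 * padicValRat q x < padicValRat q c) :
    ¬ IsPreper c x := by
  have main : ∀ n : ℕ, ((fc c)^[n] x ≠ 0 ∧ padicValRat q ((fc c)^[n] x) < 0 ∧
      2 * padicValRat q ((fc c)^[n] x) < padicValRat q c) ∧
      padicValRat q ((fc c)^[n+1] x) < padicValRat q ((fc c)^[n] x) := by
    intro n
    induction n with
    | zero =>
      refine ⟨⟨hx, hneg, hv⟩, ?_⟩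
      obtain ⟨h1, h2⟩ := blow_step hc hx hv
      simp only [zero_add, Function.iterate_one, Function.iterate_zero, id_eq]
      rw [h2]; linarith
    | succ k ih =>
      obtain ⟨⟨h1, h2, h3⟩, h4⟩ := ih
      obtain ⟨g1, g2⟩ := blow_step hc h1 h3
      rw [← Function.iterate_succ_apply' (fc c) k x] at g1 g2
      have h2' : padicValRat q ((fc c)^[k+1] x) < 0 := by rw [g2]; linarith
      have h3' : 2 * padicValRat q ((fc c)^[k+1] x) < padicValRat q c := by
        rw [g2]; linarith
      refine ⟨⟨g1, h2', h3'⟩, ?_⟩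
      obtain ⟨f1, f2⟩ := blow_step hc g1 h3'
      rw [← Function.iterate_succ_apply' (fc c) (k+1) x] at f2
      rw [f2]; linarith
  have anti : StrictAnti (fun n => padicValRat q ((fc c)^[n] x)) :=
    strictAnti_nat_of_succ_lt (fun n => (main n).2)
  rintro ⟨m, n, hmn, he⟩
  have := anti hmn
  simp only [he] at this
  exact lt_irrefl _ this

lemma c_pos {p : ℕ} (hp5 : 5 < p) : 0 < (1 / 4 - 1 / (p : ℚ) ^ 2) := by
  have hp6 : (6 : ℚ) ≤ (p : ℚ) := by exact_mod_cast hp5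
  have : (0:ℚ) < (p:ℚ)^2 := by positivity
  rw [sub_pos, div_lt_div_iff₀ this (by norm_num)]
  nlinarith

lemma val_q_nat {q n : ℕ} [Fact q.Prime] (hn : ¬ q ∣ n) : padicValRat q (n : ℚ) = 0 := by
  rw [padicValRat.of_nat, padicValNat.eq_zero_of_not_dvd hn]; rfl

lemma valc_two {p : ℕ} (hp : p.Prime) (hp5 : 5 < p) :
    padicValRat 2 (1 / 4 - 1 / (p : ℚ) ^ 2) = -2 := by
  haveI : Fact (Nat.Prime 2) := ⟨Nat.prime_two⟩
  have hpo : ¬ (2 ∣ p) := by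
    intro h
    rcases (Nat.Prime.eq_one_or_self_of_dvd hp 2 h) with h2 | h2 <;> omega
  have hv4 : padicValRat 2 (1 / 4 : ℚ) = -2 := by
    rw [one_div, show (4:ℚ) = ((2:ℕ):ℚ) ^ 2 by norm_num]
    exact_mod_cast padicValRat.self_pow_inv 2
  have hvp : padicValRat 2 (-(1 / (p : ℚ) ^ 2)) = 0 := by
    have hp0 : (p : ℚ) ≠ 0 := by
      have : 0 < p := by omega
      exact_mod_cast this.ne'
    rw [padicValRat.neg, one_div, padicValRat.inv, padicValRat.pow (p : ℚ),
      val_q_nat hpo]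
    ring
  have hc : (1 / 4 - 1 / (p : ℚ) ^ 2) ≠ 0 := (c_pos hp5).ne'
  have : (1 / 4 - 1 / (p : ℚ) ^ 2) = 1 / 4 + -(1 / (p : ℚ) ^ 2) := by ring
  rw [this] at hc ⊢
  rw [padicValRat.add_eq_of_lt hc (by norm_num) (by
      simp only [ne_eq, neg_eq_zero, one_div, inv_eq_zero, pow_eq_zero_iff]
      intro h
      have : 0 < p := by omega
      simp [Nat.cast_eq_zero] at h
      omega) (by rw [hv4, hvp]; norm_num), hv4]

lemma valc_p {p : ℕ} (hp : p.Prime) (hp5 : 5 < p) :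
    padicValRat p (1 / 4 - 1 / (p : ℚ) ^ 2) = -2 := by
  haveI : Fact (Nat.Prime p) := ⟨hp⟩
  have hp4 : ¬ (p ∣ 4) := by
    intro h
    have := Nat.le_of_dvd (by norm_num) h
    omega
  have hv4 : padicValRat p (1 / 4 : ℚ) = 0 := by
    rw [one_div, show (4:ℚ) = ((4:ℕ):ℚ) by norm_num, padicValRat.inv, val_q_nat hp4]
    ring
  have hvp : padicValRat p (-(1 / (p : ℚ) ^ 2)) = -2 := by
    rw [padicValRat.neg, one_div]
    exact_mod_cast padicValRat.self_pow_inv 2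
  have hc : (1 / 4 - 1 / (p : ℚ) ^ 2) ≠ 0 := (c_pos hp5).ne'
  have heq : (1 / 4 - 1 / (p : ℚ) ^ 2) = -(1 / (p : ℚ) ^ 2) + 1 / 4 := by ring
  rw [heq] at hc ⊢
  rw [padicValRat.add_eq_of_lt hc (by
      simp only [ne_eq, neg_eq_zero, one_div, inv_eq_zero, pow_eq_zero_iff]
      intro h
      simp [Nat.cast_eq_zero] at h
      omega) (by norm_num) (by rw [hv4, hvp]; norm_num), hvp]

lemma valc_other {p q : ℕ} (hp : p.Prime) (hp5 : 5 < p) (hq : q.Prime) [Fact q.Prime]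
    (hq2 : q ≠ 2) (hqp : q ≠ p) :
    0 ≤ padicValRat q (1 / 4 - 1 / (p : ℚ) ^ 2) := by
  have hq4 : ¬ (q ∣ 4) := by
    intro h
    have := (Nat.prime_dvd_prime_iff_eq hq Nat.prime_two).mp
      (hq.dvd_of_dvd_pow (n := 2) (by norm_num at h ⊢; exact h : q ∣ 2 ^ 2))
    exact hq2 this
  have hqnp : ¬ (q ∣ p) := fun h => hqp ((Nat.prime_dvd_prime_iff_eq hq hp).mp h)
  have hp0 : (p : ℚ) ≠ 0 := by
    have : 0 < p := by omega
    exact_mod_cast this.ne'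
  have hv4 : padicValRat q (1 / 4 : ℚ) = 0 := by
    rw [one_div, show (4:ℚ) = ((4:ℕ):ℚ) by norm_num, padicValRat.inv, val_q_nat hq4]
    ring
  have hvp : padicValRat q (-(1 / (p : ℚ) ^ 2)) = 0 := by
    rw [padicValRat.neg, one_div, padicValRat.inv, padicValRat.pow (p : ℚ), val_q_nat hqnp]
    ring
  have hc : (1 / 4 - 1 / (p : ℚ) ^ 2) ≠ 0 := (c_pos hp5).ne'
  have heq : (1 / 4 - 1 / (p : ℚ) ^ 2) = 1 / 4 + -(1 / (p : ℚ) ^ 2) := by ring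
  rw [heq] at hc ⊢
  have := padicValRat.min_le_padicValRat_add (p := q) hc
  rw [hv4, hvp] at this
  simpa using this

lemma padicValRat_nonneg_of_den_not_dvd {q : ℕ} {x : ℚ} (h : ¬ q ∣ x.den) :
    0 ≤ padicValRat q x := by
  rw [padicValRat_def, padicValNat.eq_zero_of_not_dvd h]
  simp

lemma val_eq_neg_one {q : ℕ} [Fact q.Prime] {c x : ℚ} (hc : c ≠ 0)
    (hvc : padicValRat q c = -2) (hx : IsPreper c x) : padicValRat q x = -1 := by
  rcases lt_trichotomy (padicValRat q x) (-1) with h | h | h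
  · exfalso
    have hx0 : x ≠ 0 := by
      intro h0; rw [h0, padicValRat.zero] at h; omega
    exact blowup (q := q) hc hx0 (by omega) (by rw [hvc]; omega) hx
  · exact h
  · exfalso
    have hv0 : 0 ≤ padicValRat q x := by omega
    have hy : IsPreper c (fc c x) := preper_step hx
    have hvy : padicValRat q (fc c x) = -2 := by
      by_cases hx0 : x = 0
      · have : fc c x = c := by simp [fc, hx0]
        rw [this, hvc]
      · have hx2 : x ^ 2 ≠ 0 := pow_ne_zero _ hx0
        have hvx2 : padicValRat q (x ^ 2) = 2 * padicValRat q x := by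
          rw [padicValRat.pow x]; push_cast; ring
        have hlt : padicValRat q c < padicValRat q (x ^ 2) := by omega
        have hne : c + x ^ 2 ≠ 0 := by
          intro h0
          have : x ^ 2 = -c := by linarith [h0]
          rw [this, padicValRat.neg] at hlt
          omega
        have : fc c x = c + x ^ 2 := by show x ^ 2 + c = _; ring
        rw [this, padicValRat.add_eq_of_lt hne hc hx2 hlt, hvc]
    have hy0 : fc c x ≠ 0 := by
      intro h0; rw [h0, padicValRat.zero] at hvy; omega
    exact blowup (q := q) hc hy0 (by omega) (by rw [hvc]; omega) hy

lemma den_eq {p : ℕ} (hp : p.Prime) (hp5 : 5 < p) {x : ℚ}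
    (h2 : padicValRat 2 x = -1) (hpv : padicValRat p x = -1)
    (hother : ∀ q : ℕ, q.Prime → q ≠ 2 → q ≠ p → 0 ≤ padicValRat q x) :
    x.den = 2 * p := by
  have hx0 : x ≠ 0 := by
    intro h0; rw [h0, padicValRat.zero] at h2; omega
  have hnum0 : x.num ≠ 0 := Rat.num_ne_zero.mpr hx0
  have hcop := x.reduced
  have hDne : x.den ≠ 0 := x.den_ne_zero
  -- key: for a prime q dividing den, num is not divisible
  have hkey : ∀ q : ℕ, q.Prime → q ∣ x.den → padicValNat q x.num.natAbs = 0 := by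
    intro q hq hqd
    apply padicValNat.eq_zero_of_not_dvd
    intro hqn
    have := Nat.Coprime.eq_one_of_dvd (hcop.coprime_dvd_left hqn) hqd
    exact hq.ne_one this
  have hval : ∀ q : ℕ, q.Prime → padicValRat q x =
      (padicValNat q x.num.natAbs : ℤ) - padicValNat q x.den := by
    intro q hq
    rw [padicValRat_def, padicValInt]
  have main : ∀ q : ℕ, q.Prime → padicValNat q x.den =
      (if 2 = q then 1 else 0) + (if p = q then 1 else 0) := by
    intro q hq
    haveI : Fact q.Prime := ⟨hq⟩
    by_cases hq2 : q = 2
    · subst hq2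
      have hdvd : 2 ∣ x.den := by
        by_contra hnd
        have := padicValRat_nonneg_of_den_not_dvd (x := x) hnd
        omega
      have e1 : padicValNat 2 x.num.natAbs = 0 := hkey 2 hq hdvd
      have e2 : (-1 : ℤ) = ((0:ℕ) : ℤ) - (padicValNat 2 x.den : ℤ) := by
        rw [← e1, ← h2]; exact hval 2 hq
      rw [if_pos rfl, if_neg (show ¬ p = 2 by omega)]
      omega
    · by_cases hqp : q = p
      · subst hqp
        have hdvd : q ∣ x.den := by
          by_contra hnd
          have := padicValRat_nonneg_of_den_not_dvd (x := x) hnd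
          omega
        have e1 : padicValNat q x.num.natAbs = 0 := hkey q hq hdvd
        have e2 : (-1 : ℤ) = ((0:ℕ) : ℤ) - (padicValNat q x.den : ℤ) := by
          rw [← e1, ← hpv]; exact hval q hq
        rw [if_neg (show ¬ 2 = q by omega), if_pos rfl]
        omega
      · have hnd : ¬ q ∣ x.den := by
          intro hqd
          have h1 : padicValNat q x.num.natAbs = 0 := hkey q hq hqd
          have h2' : padicValRat q x = ((0:ℕ) : ℤ) - (padicValNat q x.den : ℤ) := by
            rw [← h1]; exact hval q hq
          have h3 : 1 ≤ padicValNat q x.den :=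
            one_le_padicValNat_of_dvd hDne hqd
          have h4 := hother q hq hq2 hqp
          omega
        rw [padicValNat.eq_zero_of_not_dvd hnd,
          if_neg (fun h => hq2 h.symm), if_neg (fun h => hqp h.symm)]
  apply Nat.eq_of_factorization_eq hDne (by positivity)
  intro q
  by_cases hq : q.Prime
  · rw [Nat.factorization_def _ hq, main q hq,
      Nat.factorization_mul (by norm_num) (by omega),
      Nat.Prime.factorization Nat.prime_two, Nat.Prime.factorization hp]
    simp [Finsupp.single_apply]
  · rw [Nat.factorization_eq_zero_of_not_prime _ hq,
      Nat.factorization_eq_zero_of_not_prime _ hq]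

lemma preper_form {p : ℕ} (hp : p.Prime) (hp5 : 5 < p) {x : ℚ}
    (hx : IsPreper (1 / 4 - 1 / (p : ℚ) ^ 2) x) :
    x.den = 2 * p ∧ ¬ (2 : ℤ) ∣ x.num ∧ ¬ (p : ℤ) ∣ x.num := by
  haveI : Fact (Nat.Prime 2) := ⟨Nat.prime_two⟩
  haveI : Fact (Nat.Prime p) := ⟨hp⟩
  have hc : (1 / 4 - 1 / (p : ℚ) ^ 2) ≠ 0 := (c_pos hp5).ne'
  have hden : x.den = 2 * p := by
    refine den_eq hp hp5 (val_eq_neg_one hc (valc_two hp hp5) hx)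
      (val_eq_neg_one hc (valc_p hp hp5) hx) ?_
    intro q hq hq2 hqp
    haveI : Fact q.Prime := ⟨hq⟩
    by_contra h
    push_neg at h
    have hx0 : x ≠ 0 := by
      intro h0; rw [h0, padicValRat.zero] at h; omega
    have hvo := valc_other hp hp5 hq hq2 hqp
    exact blowup (q := q) hc hx0 h (by omega) hx
  have hcop := x.reduced
  refine ⟨hden, ?_, ?_⟩
  · intro h2
    have h2n : 2 ∣ x.num.natAbs := by
      rw [← Int.natAbs_dvd_natAbs] at h2; exact_mod_cast h2
    have h2d : 2 ∣ x.den := by rw [hden]; exact ⟨p, rfl⟩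
    have := Nat.Coprime.eq_one_of_dvd (hcop.coprime_dvd_left h2n) h2d
    omega
  · intro h2
    have h2n : p ∣ x.num.natAbs := by
      rw [← Int.natAbs_dvd_natAbs] at h2; exact_mod_cast h2
    have h2d : p ∣ x.den := by rw [hden]; exact ⟨2, by ring⟩
    have := Nat.Coprime.eq_one_of_dvd (hcop.coprime_dvd_left h2n) h2d
    omega

lemma num_abs_le {p : ℕ} (hp5 : 5 < p) {x : ℚ} (hden : x.den = 2 * p)
    (hb : |x| ≤ 3 / 2) : |x.num| ≤ 3 * p := by
  have hd0 : (0 : ℚ) < (x.den : ℚ) := by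
    have := x.pos
    exact_mod_cast x.pos
  have h1 : |x| = (|x.num| : ℚ) / (x.den : ℚ) := by
    rw [← Rat.num_div_den x, abs_div, abs_of_nonneg hd0.le]
    push_cast
    rw [Rat.num_div_den x]
  have h2 : (|x.num| : ℚ) ≤ 3 / 2 * (x.den : ℚ) := by
    rw [h1, div_le_iff₀ hd0] at hb
    exact hb
  rw [hden] at h2
  push_cast at h2
  have : (|x.num| : ℚ) ≤ ((3 * p : ℤ) : ℚ) := by push_cast; linarith
  exact_mod_cast this

lemma classify {p : ℕ} (hp : p.Prime) (hp5 : 5 < p) {x : ℚ}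
    (hx : IsPreper (1 / 4 - 1 / (p : ℚ) ^ 2) x) :
    x = 1 / 2 + 1 / (p : ℚ) ∨ x = 1 / 2 - 1 / (p : ℚ) ∨
      x = -(1 / 2) + 1 / (p : ℚ) ∨ x = -(1 / 2) - 1 / (p : ℚ) := by
  have hp0 : (p : ℚ) ≠ 0 := by
    have : 0 < p := by omega
    exact_mod_cast this.ne'
  have hpZ6 : (6 : ℤ) ≤ (p : ℤ) := by exact_mod_cast (by omega : 6 ≤ p)
  obtain ⟨hden, hodd, hpnd⟩ := preper_form hp hp5 hx
  have hy : IsPreper (1 / 4 - 1 / (p : ℚ) ^ 2) (fc _ x) := preper_step hx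
  obtain ⟨hden', hodd', _⟩ := preper_form hp hp5 hy
  set r : ℤ := x.num with hr
  set r' : ℤ := (fc (1 / 4 - 1 / (p : ℚ) ^ 2) x).num with hr'
  have hcast : ((2 * p : ℕ) : ℚ) = 2 * (p : ℚ) := by push_cast; ring
  have hxr : x = (r : ℚ) / (2 * p) := by
    rw [← Rat.num_div_den x, hden, hcast]
  have hyr : fc (1 / 4 - 1 / (p : ℚ) ^ 2) x = (r' : ℚ) / (2 * p) := by
    rw [← Rat.num_div_den (fc _ x), hden', hcast]
  have hrb : |r| ≤ 3 * p := num_abs_le hp5 hden (preper_bound (c_pos hp5) hx)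
  have hrb' : |r'| ≤ 3 * p := num_abs_le hp5 hden' (preper_bound (c_pos hp5) hy)
  obtain ⟨hrb1, hrb2⟩ := abs_le.mp hrb
  -- key equation
  have hkeyQ : 2 * (p : ℚ) * (r' : ℚ) = (r : ℚ) ^ 2 + (p : ℚ) ^ 2 - 4 := by
    have h0 : (r' : ℚ) / (2 * p) = ((r : ℚ) / (2 * p)) ^ 2 + (1 / 4 - 1 / (p : ℚ) ^ 2) := by
      rw [← hxr, ← hyr]; rfl
    field_simp at h0
    have h8 : (8 : ℚ) * (p:ℚ)^3 ≠ 0 := by positivity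
    refine mul_left_cancel₀ h8 ?_
    linear_combination (2 * (p:ℚ)^3) * h0
  have hkey : 2 * (p : ℤ) * r' = r ^ 2 + (p : ℤ) ^ 2 - 4 := by exact_mod_cast hkeyQ
  have hpdvd : (p : ℤ) ∣ (r - 2) * (r + 2) := ⟨2 * r' - p, by linear_combination -hkey⟩
  have hpZ : Prime (p : ℤ) := Nat.prime_iff_prime_int.mp hp
  have hpodd : ¬ (2 : ℤ) ∣ (p : ℤ) := by
    intro h
    have h2 : (2 : ℤ).natAbs ∣ (p : ℤ).natAbs := Int.natAbs_dvd_natAbs.mpr h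
    simp at h2
    rcases (Nat.Prime.eq_one_or_self_of_dvd hp 2 h2) with h3 | h3 <;> omega
  -- a bound on the multiplier k
  have kbound : ∀ k : ℤ, (p : ℤ) * k = r - 2 ∨ (p : ℤ) * k = r + 2 → |k| ≤ 3 := by
    rintro k hk
    by_contra hb
    push_neg at hb
    have h4 : 4 ≤ |k| := by omega
    have habs : |(p : ℤ) * k| = p * |k| := by
      rw [abs_mul, abs_of_nonneg (by omega : (0:ℤ) ≤ (p:ℤ))]
    have hle : |(p : ℤ) * k| ≤ 3 * p + 2 := by
      rcases hk with hk | hk <;> rw [hk] <;> rw [abs_le] <;> omega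
    rw [habs] at hle
    nlinarith
  rcases hpZ.dvd_mul.mp hpdvd with hd | hd
  · obtain ⟨k, hk⟩ := hd
    have hkb := kbound k (Or.inl hk.symm)
    have hreq : r = 2 + (p:ℤ) * k := by linarith
    have hkodd : ¬ (2 : ℤ) ∣ k := by
      rintro ⟨t, rfl⟩
      exact hodd ⟨1 + p * t, by rw [hreq]; ring⟩
    obtain ⟨hkb1, hkb2⟩ := abs_le.mp hkb
    have hkcases : k = -3 ∨ k = -1 ∨ k = 1 ∨ k = 3 := by omega
    rcases hkcases with rfl | rfl | rfl | rfl
    · -- k = -3 : escape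
      exfalso
      have hre : 2 * (p:ℤ) * r' = 2 * p * (5 * p - 6) := by
        rw [hkey, hreq]; ring
      have hr'eq : r' = 5 * p - 6 :=
        mul_left_cancel₀ (by omega : (2 * (p:ℤ)) ≠ 0) hre
      have := le_abs_self r'
      omega
    · -- k = -1
      right; right; left
      have hrQ : (r : ℚ) = 2 - (p:ℚ) := by push_cast [hreq]; ring
      rw [hxr, hrQ]; field_simp; ring
    · -- k = 1
      left
      have hrQ : (r : ℚ) = 2 + (p:ℚ) := by push_cast [hreq]; ring
      rw [hxr, hrQ]; field_simp; ring
    · -- k = 3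
      exfalso
      have := le_abs_self r
      omega
  · obtain ⟨k, hk⟩ := hd
    have hkb := kbound k (Or.inr hk.symm)
    have hreq : r = -2 + (p:ℤ) * k := by linarith
    have hkodd : ¬ (2 : ℤ) ∣ k := by
      rintro ⟨t, rfl⟩
      exact hodd ⟨-1 + p * t, by rw [hreq]; ring⟩
    obtain ⟨hkb1, hkb2⟩ := abs_le.mp hkb
    have hkcases : k = -3 ∨ k = -1 ∨ k = 1 ∨ k = 3 := by omega
    rcases hkcases with rfl | rfl | rfl | rfl
    · -- k = -3
      exfalso
      have := neg_abs_le r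
      omega
    · -- k = -1
      right; right; right
      have hrQ : (r : ℚ) = -2 - (p:ℚ) := by push_cast [hreq]; ring
      rw [hxr, hrQ]; field_simp; ring
    · -- k = 1
      right; left
      have hrQ : (r : ℚ) = -2 + (p:ℚ) := by push_cast [hreq]; ring
      rw [hxr, hrQ]; field_simp; ring
    · -- k = 3 : escape
      exfalso
      have hre : 2 * (p:ℤ) * r' = 2 * p * (5 * p - 6) := by
        rw [hkey, hreq]; ring
      have hr'eq : r' = 5 * p - 6 :=
        mul_left_cancel₀ (by omega : (2 * (p:ℤ)) ≠ 0) hre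
      have := le_abs_self r'
      omega

/-- For all sufficiently large primes `p` and `c = 1/4 - 1/p²`, the map `f_c` has exactly
the four rational preperiodic points `±1/2 ± 1/p`, and `1/2 ± 1/p` are fixed. -/
theorem graph_4_1_1_family :
    ∃ P : ℕ, ∀ p : ℕ, p.Prime → P < p →
      letI c : ℚ := 1 / 4 - 1 / (p : ℚ) ^ 2
      {x : ℚ | IsPreper c x} =
        {1 / 2 + 1 / (p : ℚ), 1 / 2 - 1 / (p : ℚ),
          -(1 / 2) + 1 / (p : ℚ), -(1 / 2) - 1 / (p : ℚ)} ∧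
      {x : ℚ | IsPreper c x}.ncard = 4 ∧
      fc c (1 / 2 + 1 / (p : ℚ)) = 1 / 2 + 1 / (p : ℚ) ∧
      fc c (1 / 2 - 1 / (p : ℚ)) = 1 / 2 - 1 / (p : ℚ) := by
  refine ⟨5, fun p hp hp5 => ?_⟩
  set c : ℚ := 1 / 4 - 1 / (p : ℚ) ^ 2 with hc
  have hp0 : (p : ℚ) ≠ 0 := by
    have : 0 < p := by omega
    exact_mod_cast this.ne'
  have hpQ : (6 : ℚ) ≤ (p : ℚ) := by exact_mod_cast (by omega : 6 ≤ p)
  have hfixa : fc c (1 / 2 + 1 / (p : ℚ)) = 1 / 2 + 1 / (p : ℚ) := by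
    show (1 / 2 + 1 / (p:ℚ)) ^ 2 + (1 / 4 - 1 / (p : ℚ) ^ 2) = _
    field_simp
    ring
  have hfixb : fc c (1 / 2 - 1 / (p : ℚ)) = 1 / 2 - 1 / (p : ℚ) := by
    show (1 / 2 - 1 / (p:ℚ)) ^ 2 + (1 / 4 - 1 / (p : ℚ) ^ 2) = _
    field_simp
    ring
  have hmapc : fc c (-(1 / 2) + 1 / (p : ℚ)) = 1 / 2 - 1 / (p : ℚ) := by
    show (-(1 / 2) + 1 / (p:ℚ)) ^ 2 + (1 / 4 - 1 / (p : ℚ) ^ 2) = _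
    field_simp
    ring
  have hmapd : fc c (-(1 / 2) - 1 / (p : ℚ)) = 1 / 2 + 1 / (p : ℚ) := by
    show (-(1 / 2) - 1 / (p:ℚ)) ^ 2 + (1 / 4 - 1 / (p : ℚ) ^ 2) = _
    field_simp
    ring
  have hpre : ∀ x : ℚ, fc c x = x → IsPreper c x := by
    intro x hx
    exact ⟨0, 1, zero_lt_one, by simp [hx]⟩
  have hpre2 : ∀ x y : ℚ, fc c x = y → fc c y = y → IsPreper c x := by
    intro x y h1 h2
    refine ⟨1, 2, one_lt_two, ?_⟩
    simp only [Function.iterate_one, Function.iterate_succ, Function.iterate_zero,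
      Function.comp_apply, id_eq]
    rw [h1, h2]
  have hseteq : {x : ℚ | IsPreper c x} =
      {1 / 2 + 1 / (p : ℚ), 1 / 2 - 1 / (p : ℚ),
        -(1 / 2) + 1 / (p : ℚ), -(1 / 2) - 1 / (p : ℚ)} := by
    ext x
    simp only [Set.mem_setOf_eq, Set.mem_insert_iff, Set.mem_singleton_iff]
    constructor
    · intro hx
      exact classify hp hp5 hx
    · rintro (rfl | rfl | rfl | rfl)
      · exact hpre _ hfixa
      · exact hpre _ hfixb
      · exact hpre2 _ _ hmapc hfixb
      · exact hpre2 _ _ hmapd hfixa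
  refine ⟨hseteq, ?_, hfixa, hfixb⟩
  rw [hseteq]
  have h12 : (1:ℚ) / 2 + 1 / p ≠ 1 / 2 - 1 / p := by
    intro h; field_simp at h; linarith
  have h13 : (1:ℚ) / 2 + 1 / p ≠ -(1 / 2) + 1 / p := by
    intro h; field_simp at h; linarith
  have h14 : (1:ℚ) / 2 + 1 / p ≠ -(1 / 2) - 1 / p := by
    intro h; field_simp at h; linarith
  have h23 : (1:ℚ) / 2 - 1 / p ≠ -(1 / 2) + 1 / p := by
    intro h; field_simp at h; linarith
  have h24 : (1:ℚ) / 2 - 1 / p ≠ -(1 / 2) - 1 / p := by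
    intro h; field_simp at h; linarith
  have h34 : -((1:ℚ) / 2) + 1 / p ≠ -(1 / 2) - 1 / p := by
    intro h; field_simp at h; linarith
  rw [Set.ncard_insert_of_notMem (by
      simp only [Set.mem_insert_iff, Set.mem_singleton_iff]
      push_neg
      exact ⟨h12, h13, h14⟩),
    Set.ncard_insert_of_notMem (by
      simp only [Set.mem_insert_iff, Set.mem_singleton_iff]
      push_neg
      exact ⟨h23, h24⟩),
    Set.ncard_insert_of_notMem (by
      simp only [Set.mem_singleton_iff]
      exact h34),
    Set.ncard_singleton]
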